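/- Let f: ℝ^d → ℝ be continuously differentiable on a hyperrectangle B with ∂f/∂xᵢ ≥ Mᵢ > 0 on B for each i. Fix t ∈ B, h = (h₁,…,h_d) with hᵢMᵢ = h₁M₁ for all i, and define f_t(x) := f(x) − h₁M₁·ψ((x₁−t₁)/h₁,…,(x_d−t_d)/h_d), where ψ(u) := (1+Σᵢuᵢ)·1{u ≤ 0, Σᵢuᵢ ≥ −1}. If the set {x: x ≤ t componentwise and Σᵢ(xᵢ−tᵢ)/hᵢ ≥ −1} is contained in B, then f_t is coordinate-wise nondecreasing. -/

import Mathlib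

open MeasureTheory

/-- The lower isotonic simplex kernel `ψ(u) = (1 + Σᵢ uᵢ)·1{u ≤ 0, Σᵢ uᵢ ≥ -1}`. -/
noncomputable def psiIso {d : ℕ} (u : EuclideanSpace ℝ (Fin d)) : ℝ :=
  Set.indicator {u : EuclideanSpace ℝ (Fin d) | (∀ i, u i ≤ 0) ∧ -1 ≤ ∑ i, u i}
    (fun u => 1 + ∑ i, u i) u

lemma psiIso_of_mem {d : ℕ} {u : EuclideanSpace ℝ (Fin d)} (h1 : ∀ i, u i ≤ 0)
    (h2 : -1 ≤ ∑ i, u i) : psiIso u = 1 + ∑ i, u i :=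
  Set.indicator_of_mem
    (show u ∈ {u : EuclideanSpace ℝ (Fin d) | (∀ i, u i ≤ 0) ∧ -1 ≤ ∑ i, u i} from ⟨h1, h2⟩) _

lemma psiIso_of_not_mem {d : ℕ} {u : EuclideanSpace ℝ (Fin d)}
    (h : ¬((∀ i, u i ≤ 0) ∧ -1 ≤ ∑ i, u i)) : psiIso u = 0 :=
  Set.indicator_of_notMem
    (show u ∉ {u : EuclideanSpace ℝ (Fin d) | (∀ i, u i ≤ 0) ∧ -1 ≤ ∑ i, u i} from h) _

lemma psiIso_nonneg {d : ℕ} (u : EuclideanSpace ℝ (Fin d)) : 0 ≤ psiIso u :=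
  Set.indicator_nonneg (fun v hv => by linarith [hv.2]) u

lemma vec_sum_apply {d : ℕ} (s : Finset (Fin d)) (g : Fin d → EuclideanSpace ℝ (Fin d))
    (j : Fin d) : (∑ i ∈ s, g i) j = ∑ i ∈ s, g i j := by
  rw [WithLp.ofLp_sum]; exact Finset.sum_apply j s _

lemma vec_decomp {d : ℕ} (v : EuclideanSpace ℝ (Fin d)) :
    ∑ i, v i • EuclideanSpace.single i (1:ℝ) = v := by
  ext j
  rw [vec_sum_apply]
  simp [EuclideanSpace.single_apply]

lemma key_mvt {d : ℕ} [Nonempty (Fin d)] (f : EuclideanSpace ℝ (Fin d) → ℝ)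
    (M : Fin d → ℝ) (hM : ∀ i, 0 < M i)
    (x y : EuclideanSpace ℝ (Fin d)) (hxy : ∀ i, x i ≤ y i)
    (hbox : ∀ z : EuclideanSpace ℝ (Fin d), (∀ i, x i ≤ z i ∧ z i ≤ y i) →
      ∀ i, M i ≤ fderiv ℝ f z (EuclideanSpace.single i 1)) :
    ∑ i, M i * (y i - x i) ≤ f y - f x := by
  set K : ℝ := ∑ i, M i * (y i - x i) with hK
  set γ : ℝ → EuclideanSpace ℝ (Fin d) := fun s => x + s • (y - x) with hγdef
  have hγ : ∀ s : ℝ, HasDerivAt γ (y - x) s := by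
    intro s
    simpa [hγdef] using ((hasDerivAt_id s).smul_const (y - x)).const_add x
  have hγ0 : γ 0 = x := by simp [hγdef]
  have hγ1 : γ 1 = y := by simp [hγdef]
  have hγap : ∀ (s : ℝ) (i : Fin d), γ s i = x i + s * (y i - x i) := by
    intro s i
    simp [hγdef]
  have hmem : ∀ s ∈ Set.Icc (0:ℝ) 1, ∀ i, x i ≤ γ s i ∧ γ s i ≤ y i := by
    intro s hs i
    rw [hγap]
    constructor
    · nlinarith [hxy i, hs.1, hs.2]
    · nlinarith [hxy i, hs.1, hs.2]
  have hdiff : ∀ s ∈ Set.Icc (0:ℝ) 1, DifferentiableAt ℝ f (γ s) := by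
    intro s hs
    by_contra hcon
    obtain ⟨i⟩ := (inferInstance : Nonempty (Fin d))
    have h1 := hbox (γ s) (hmem s hs) i
    rw [fderiv_zero_of_not_differentiableAt hcon] at h1
    simp at h1
    exact absurd h1 (not_le.2 (hM i))
  have hD : ∀ s ∈ Set.Icc (0:ℝ) 1, K ≤ fderiv ℝ f (γ s) (y - x) := by
    intro s hs
    conv_rhs => rw [← vec_decomp (y - x)]
    rw [map_sum]
    simp only [ContinuousLinearMap.map_smul, smul_eq_mul]
    apply Finset.sum_le_sum
    intro i _
    have h1 := hbox (γ s) (hmem s hs) i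
    have h2 : (0:ℝ) ≤ y i - x i := sub_nonneg.2 (hxy i)
    have h3 : ((y - x : EuclideanSpace ℝ (Fin d)) i) = y i - x i := by
      simp
    rw [h3, mul_comm (y i - x i)]
    exact mul_le_mul_of_nonneg_right h1 h2
  set G : ℝ → ℝ := fun s => f (γ s) - s * K with hGdef
  have hG : ∀ s ∈ Set.Icc (0:ℝ) 1,
      HasDerivAt G (fderiv ℝ f (γ s) (y - x) - K) s := by
    intro s hs
    exact (((hdiff s hs).hasFDerivAt).comp_hasDerivAt s (hγ s)).sub
      (hasDerivAt_mul_const K)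
  have hmono : MonotoneOn G (Set.Icc (0:ℝ) 1) := by
    apply monotoneOn_of_deriv_nonneg (convex_Icc 0 1)
    · exact fun s hs => (hG s hs).differentiableAt.continuousAt.continuousWithinAt
    · intro s hs
      rw [interior_Icc] at hs
      exact (hG s (Set.Ioo_subset_Icc_self hs)).differentiableAt.differentiableWithinAt
    · intro s hs
      rw [interior_Icc] at hs
      have hs' := Set.Ioo_subset_Icc_self hs
      rw [(hG s hs').deriv]
      linarith [hD s hs']
  have := hmono (Set.left_mem_Icc.2 zero_le_one) (Set.right_mem_Icc.2 zero_le_one) zero_le_one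
  simp only [hGdef, hγ0, hγ1, zero_mul, one_mul, sub_zero] at this
  linarith

theorem perturbed_isotonic {d : ℕ} (f : EuclideanSpace ℝ (Fin d) → ℝ)
    (a b t : EuclideanSpace ℝ (Fin d)) (M h : Fin d → ℝ) (c : ℝ)
    (B : Set (EuclideanSpace ℝ (Fin d)))
    (hB : B = {x : EuclideanSpace ℝ (Fin d) | ∀ i, a i ≤ x i ∧ x i ≤ b i})
    (hmono : ∀ x y : EuclideanSpace ℝ (Fin d), (∀ i, x i ≤ y i) → f x ≤ f y)
    (hC1 : ContDiffOn ℝ 1 f B)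
    (hM : ∀ i, 0 < M i)
    (hderiv : ∀ x ∈ B, ∀ i, M i ≤ fderiv ℝ f x (EuclideanSpace.single i 1))
    (hh : ∀ i, 0 < h i)
    (hc : ∀ i, h i * M i = c)
    (hT : {x : EuclideanSpace ℝ (Fin d) |
        (∀ i, x i ≤ t i) ∧ -1 ≤ ∑ i, (x i - t i) / h i} ⊆ B) :
    ∀ x y : EuclideanSpace ℝ (Fin d), (∀ i, x i ≤ y i) →
      f x - c * psiIso (WithLp.toLp 2 (fun i => (x i - t i) / h i)) ≤
        f y - c * psiIso (WithLp.toLp 2 (fun i => (y i - t i) / h i)) := by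
  intro x y hxy
  have hψx0 : 0 ≤ psiIso (WithLp.toLp 2 (fun i => (x i - t i) / h i)) :=
    psiIso_nonneg _
  have hψy0 : 0 ≤ psiIso (WithLp.toLp 2 (fun i => (y i - t i) / h i)) :=
    psiIso_nonneg _
  have hfxy := hmono x y hxy
  rcases Nat.eq_zero_or_pos d with hd | hd
  · subst hd
    have he : IsEmpty (Fin 0) := inferInstance
    have hequ : (fun i => (x i - t i) / h i : Fin 0 → ℝ)
        = (fun i => (y i - t i) / h i) := funext fun i => (he.false i).elim
    rw [hequ]
    linarith
  haveI : Nonempty (Fin d) := ⟨⟨0, hd⟩⟩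
  have i₀ : Fin d := ⟨0, hd⟩
  have hcpos : 0 < c := hc i₀ ▸ mul_pos (hh i₀) (hM i₀)
  have hsum : ∀ p q : EuclideanSpace ℝ (Fin d),
      ∑ i, M i * (q i - p i)
        = c * ((∑ i, (q i - t i) / h i) - (∑ i, (p i - t i) / h i)) := by
    intro p q
    rw [← Finset.sum_sub_distrib, Finset.mul_sum]
    apply Finset.sum_congr rfl
    intro i _
    have hne : h i ≠ 0 := (hh i).ne'
    field_simp
    linear_combination (q i - p i) * hc i
  by_cases hy : (∀ i, y i ≤ t i) ∧ -1 ≤ ∑ i, (y i - t i) / h i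
  · -- ψ(uy) = 1 + S y
    have hψy : psiIso (WithLp.toLp 2 (fun i => (y i - t i) / h i))
        = 1 + ∑ i, (y i - t i) / h i := by
      apply psiIso_of_mem
      · intro i
        exact div_nonpos_of_nonpos_of_nonneg (by linarith [hy.1 i]) (hh i).le
      · exact hy.2
    have hxt : ∀ i, x i ≤ t i := fun i => le_trans (hxy i) (hy.1 i)
    by_cases hx : -1 ≤ ∑ i, (x i - t i) / h i
    · -- both in simplex
      have hψx : psiIso (WithLp.toLp 2 (fun i => (x i - t i) / h i))
          = 1 + ∑ i, (x i - t i) / h i := by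
        apply psiIso_of_mem
        · intro i
          exact div_nonpos_of_nonpos_of_nonneg (by linarith [hxt i]) (hh i).le
        · exact hx
      have hboxB : ∀ z : EuclideanSpace ℝ (Fin d), (∀ i, x i ≤ z i ∧ z i ≤ y i) → z ∈ B := by
        intro z hz
        apply hT
        refine ⟨fun i => le_trans (hz i).2 (hy.1 i), ?_⟩
        calc (-1:ℝ) ≤ ∑ i, (x i - t i) / h i := hx
          _ ≤ ∑ i, (z i - t i) / h i := by
              apply Finset.sum_le_sum
              intro i _
              exact (div_le_div_iff_of_pos_right (hh i)).mpr (by linarith [(hz i).1])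
      have hkey := key_mvt f M hM x y hxy (fun z hz i => hderiv z (hboxB z hz) i)
      rw [hsum x y] at hkey
      rw [hψx, hψy]
      linarith
    · -- x below the simplex: introduce intermediate point z with S z = -1
      have hψx : psiIso (WithLp.toLp 2 (fun i => (x i - t i) / h i)) = 0 :=
        psiIso_of_not_mem (fun hcon => hx hcon.2)
      have hSx : (∑ i, (x i - t i) / h i) < -1 := not_le.mp hx
      set Sx : ℝ := ∑ i, (x i - t i) / h i with hSxdef
      set Sy : ℝ := ∑ i, (y i - t i) / h i with hSydef
      have hSxy : Sx < Sy := lt_of_lt_of_le hSx hy.2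
      set θ : ℝ := (-1 - Sx) / (Sy - Sx) with hθdef
      have hθpos : 0 < θ := div_pos (by linarith) (by linarith)
      have hθle : θ ≤ 1 := (div_le_one (by linarith)).mpr (by linarith)
      set z : EuclideanSpace ℝ (Fin d) := WithLp.toLp 2 (fun i => x i + θ * (y i - x i)) with hzdef
      have hzap : ∀ i, z i = x i + θ * (y i - x i) := fun i => rfl
      have hxz : ∀ i, x i ≤ z i := by
        intro i
        rw [hzap]
        nlinarith [hxy i, hθpos.le]
      have hzy : ∀ i, z i ≤ y i := by
        intro i
        rw [hzap]
        nlinarith [hxy i, hθle, hθpos.le]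
      have hzt : ∀ i, z i ≤ t i := fun i => le_trans (hzy i) (hy.1 i)
      have hSz : (∑ i, (z i - t i) / h i) = -1 := by
        have hterm : ∀ i ∈ Finset.univ, (z i - t i) / h i
            = (x i - t i) / h i + θ * ((y i - t i) / h i - (x i - t i) / h i) := by
          intro i _
          rw [hzap]
          have hne : h i ≠ 0 := (hh i).ne'
          field_simp
          ring
        rw [Finset.sum_congr rfl hterm, Finset.sum_add_distrib, ← Finset.mul_sum,
          Finset.sum_sub_distrib]
        have hcan : θ * (Sy - Sx) = -1 - Sx := by
          rw [hθdef]
          exact div_mul_cancel₀ _ ((by linarith : (0:ℝ) < Sy - Sx).ne')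
        rw [hSxdef, hSydef] at hcan
        linarith [hcan]
      have hboxB : ∀ w : EuclideanSpace ℝ (Fin d), (∀ i, z i ≤ w i ∧ w i ≤ y i) → w ∈ B := by
        intro w hw
        apply hT
        refine ⟨fun i => le_trans (hw i).2 (hy.1 i), ?_⟩
        calc (-1:ℝ) = ∑ i, (z i - t i) / h i := hSz.symm
          _ ≤ ∑ i, (w i - t i) / h i := by
              apply Finset.sum_le_sum
              intro i _
              exact (div_le_div_iff_of_pos_right (hh i)).mpr (by linarith [(hw i).1])
      have hkey := key_mvt f M hM z y hzy (fun w hw i => hderiv w (hboxB w hw) i)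
      rw [hsum z y, hSz] at hkey
      have hfz := hmono x z hxz
      rw [← hSydef] at hkey
      rw [hψx, hψy]
      linarith
  · -- ψ(uy) = 0
    have hψy : psiIso (WithLp.toLp 2 (fun i => (y i - t i) / h i)) = 0 := by
      apply psiIso_of_not_mem
      intro hcon
      apply hy
      refine ⟨fun i => ?_, hcon.2⟩
      have h1 := hcon.1 i
      rcases div_nonpos_iff.mp h1 with ⟨_, hb⟩ | ⟨ha, _⟩
      · nlinarith [hh i, hb]
      · linarith
    rw [hψy]
    linarith [mul_nonneg hcpos.le hψx0]
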